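/- Parabolic lower bound: let J be a real symmetric N×N matrix with constant row sum j and smallest eigenvalue j_min < j. Then for every B ∈ ℝ and every spin configuration s (N unit vectors in ℝ³) with total spin S = Σ_μ s_μ, one has Σ_{μ,ν} J_{μν} s_μ·s_ν - B e·S ≥ j_min·N - N·B²/(4(j - j_min)), where e is the unit vector such that S = M·e. -/

import Mathlib

open Finset

private lemma key_quad (n : ℕ) (hn : 0 < n) (J : Matrix (Fin n) (Fin n) ℝ)
    (hsym : J.IsSymm) (j jmin : ℝ) (hrow : ∀ μ, ∑ ν, J μ ν = j)
    (hray : ∀ x : Fin n → ℝ, jmin * ∑ μ, (x μ) ^ 2 ≤ ∑ μ, ∑ ν, J μ ν * x μ * x ν)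
    (x : Fin n → ℝ) :
    jmin * ∑ μ, (x μ) ^ 2 + (j - jmin) * (∑ μ, x μ) ^ 2 / n ≤
      ∑ μ, ∑ ν, J μ ν * x μ * x ν := by
  have hn' : (0:ℝ) < n := by exact_mod_cast hn
  set c : ℝ := (∑ μ, x μ) / n with hc_def
  have hc : (n:ℝ) * c = ∑ μ, x μ := by rw [hc_def]; field_simp
  have hcol : ∀ ν, ∑ μ, J μ ν = j := by
    intro ν
    have : ∀ μ, J μ ν = J ν μ := fun μ => (hsym.apply μ ν).symm
    rw [Finset.sum_congr rfl fun μ _ => this μ]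
    exact hrow ν
  have h1 := hray (fun μ => x μ - c)
  have hR : (∑ μ, ∑ ν, J μ ν * (x μ - c) * (x ν - c))
      = (∑ μ, ∑ ν, J μ ν * x μ * x ν) - j * (n:ℝ) * c ^ 2 := by
    have e1 : ∀ μ, (∑ ν, J μ ν * (x μ - c) * (x ν - c))
        = (∑ ν, J μ ν * x μ * x ν) - c * (j * x μ) - c * (∑ ν, J μ ν * x ν)
          + c ^ 2 * j := by
      intro μ
      have h2 : (∑ ν, J μ ν * (x μ - c) * (x ν - c))
          = ∑ ν, (J μ ν * x μ * x ν - c * (J μ ν * x μ) - c * (J μ ν * x ν)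
              + c ^ 2 * J μ ν) := Finset.sum_congr rfl fun ν _ => by ring
      rw [h2, Finset.sum_add_distrib, Finset.sum_sub_distrib, Finset.sum_sub_distrib,
          ← Finset.mul_sum, ← Finset.mul_sum, ← Finset.mul_sum]
      have h3 : (∑ ν, J μ ν * x μ) = x μ * j := by
        rw [show (∑ ν, J μ ν * x μ) = (∑ ν, J μ ν) * x μ from by rw [Finset.sum_mul],
            hrow μ]; ring
      rw [h3, hrow μ]; ring
    rw [Finset.sum_congr rfl fun μ _ => e1 μ]
    have h4 : (∑ μ, ∑ ν, J μ ν * x ν) = j * ∑ μ, x μ := by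
      rw [Finset.sum_comm]
      rw [Finset.sum_congr rfl fun ν _ => show (∑ μ, J μ ν * x ν) = j * x ν from by
        rw [show (∑ μ, J μ ν * x ν) = (∑ μ, J μ ν) * x ν from by rw [Finset.sum_mul],
            hcol ν]]
      rw [← Finset.mul_sum]
    have h6 : (∑ μ, c * (∑ ν, J μ ν * x ν)) = c * (j * ∑ μ, x μ) := by
      rw [← Finset.mul_sum, h4]
    have h7 : (∑ μ, c * (j * x μ)) = c * (j * ∑ μ, x μ) := by
      rw [← Finset.mul_sum, ← Finset.mul_sum]
    rw [Finset.sum_add_distrib, Finset.sum_sub_distrib, Finset.sum_sub_distrib,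
        h6, h7, Finset.sum_const, Finset.card_univ, Fintype.card_fin, nsmul_eq_mul]
    rw [← hc]; ring
  have hy2 : (∑ μ, (x μ - c) ^ 2) = (∑ μ, (x μ) ^ 2) - (n:ℝ) * c ^ 2 := by
    have : (∑ μ, (x μ - c) ^ 2) = ∑ μ, ((x μ) ^ 2 - 2 * c * x μ + c ^ 2) :=
      Finset.sum_congr rfl fun μ _ => by ring
    rw [this, Finset.sum_add_distrib, Finset.sum_sub_distrib, ← Finset.mul_sum,
        Finset.sum_const, Finset.card_univ, Fintype.card_fin, nsmul_eq_mul]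
    rw [← hc]; ring
  rw [hR, hy2] at h1
  have hsq : (j - jmin) * (∑ μ, x μ) ^ 2 / n = (j - jmin) * ((n:ℝ) * c ^ 2) := by
    rw [← hc]; field_simp
  rw [hsq]
  nlinarith [h1]

/-- Parabolic lower bound: for `J` symmetric with constant row sum `j` and smallest
eigenvalue `j_min < j`, every spin configuration `s` of unit vectors in `ℝ³` satisfies
`Σ J_{μν} s_μ·s_ν - B e·S ≥ j_min·N - N·B²/(4(j - j_min))`. -/
theorem stmt_9 (n : ℕ) (hn : 0 < n) (J : Matrix (Fin n) (Fin n) ℝ)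
    (hsym : J.IsSymm) (j jmin : ℝ) (hrow : ∀ μ, ∑ ν, J μ ν = j)
    (heig : Module.End.HasEigenvalue (Matrix.toLin' J) jmin)
    (hray : ∀ x : Fin n → ℝ, jmin * ∑ μ, (x μ) ^ 2 ≤ ∑ μ, ∑ ν, J μ ν * x μ * x ν)
    (hlt : jmin < j)
    (B : ℝ) (e : Fin 3 → ℝ) (he : ∑ i, e i ^ 2 = 1)
    (s : Fin n → Fin 3 → ℝ) (hs : ∀ μ, ∑ i, (s μ i) ^ 2 = 1) :
    jmin * n - n * B ^ 2 / (4 * (j - jmin)) ≤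
      (∑ μ, ∑ ν, J μ ν * ∑ i, s μ i * s ν i) -
        B * ∑ i, e i * (∑ μ, s μ i) := by
  have hn' : (0:ℝ) < n := by exact_mod_cast hn
  have ha : (0:ℝ) < j - jmin := by linarith
  set Sv : Fin 3 → ℝ := fun i => ∑ μ, s μ i with hSv
  set M2 : ℝ := ∑ i, (Sv i) ^ 2 with hM2
  set T : ℝ := ∑ i, e i * Sv i with hT
  -- swap sums
  have hswap : (∑ μ, ∑ ν, J μ ν * ∑ i, s μ i * s ν i)
      = ∑ i, ∑ μ, ∑ ν, J μ ν * s μ i * s ν i :=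
    calc (∑ μ, ∑ ν, J μ ν * ∑ i, s μ i * s ν i)
        = ∑ μ, ∑ i, ∑ ν, J μ ν * s μ i * s ν i :=
          Finset.sum_congr rfl fun μ _ =>
            calc (∑ ν, J μ ν * ∑ i, s μ i * s ν i)
                = ∑ ν, ∑ i, J μ ν * s μ i * s ν i :=
                  Finset.sum_congr rfl fun ν _ => by
                    rw [Finset.mul_sum]
                    exact Finset.sum_congr rfl fun i _ => by ring
              _ = ∑ i, ∑ ν, J μ ν * s μ i * s ν i := Finset.sum_comm
      _ = ∑ i, ∑ μ, ∑ ν, J μ ν * s μ i * s ν i := Finset.sum_comm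
  -- key bound in each direction i
  have hkey : ∀ i : Fin 3, jmin * (∑ μ, (s μ i) ^ 2) + (j - jmin) * (Sv i) ^ 2 / n
      ≤ ∑ μ, ∑ ν, J μ ν * s μ i * s ν i := fun i =>
    key_quad n hn J hsym j jmin hrow hray (fun μ => s μ i)
  have hQsum : jmin * (n:ℝ) + (j - jmin) * M2 / n
      ≤ ∑ i, ∑ μ, ∑ ν, J μ ν * s μ i * s ν i := by
    have h1 := Finset.sum_le_sum fun i (_ : i ∈ Finset.univ) => hkey i
    have h2 : (∑ i : Fin 3, (jmin * (∑ μ, (s μ i) ^ 2) + (j - jmin) * (Sv i) ^ 2 / n))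
        = jmin * (∑ i : Fin 3, ∑ μ, (s μ i) ^ 2) + (j - jmin) * M2 / n := by
      rw [Finset.sum_add_distrib, ← Finset.mul_sum, ← Finset.sum_div,
          ← Finset.mul_sum, hM2]
    have h3 : (∑ i : Fin 3, ∑ μ, (s μ i) ^ 2) = (n:ℝ) := by
      rw [Finset.sum_comm, Finset.sum_congr rfl fun μ _ => hs μ, Finset.sum_const,
          Finset.card_univ, Fintype.card_fin, nsmul_eq_mul, mul_one]
    rw [h2, h3] at h1
    exact h1
  -- Cauchy-Schwarz
  have hCS : T ^ 2 ≤ M2 := by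
    have h := Finset.sum_mul_sq_le_sq_mul_sq Finset.univ e Sv
    rw [he, one_mul] at h
    exact h
  have hM2nn : 0 ≤ M2 := Finset.sum_nonneg fun i _ => sq_nonneg _
  -- parabola bound
  have hD : B * T ≤ (j - jmin) * M2 / n + (n:ℝ) * B ^ 2 / (4 * (j - jmin)) := by
    rw [div_add_div _ _ (ne_of_gt hn') (by positivity), le_div_iff₀ (by positivity)]
    nlinarith [sq_nonneg (2 * (j - jmin) * T - (n:ℝ) * B),
      mul_le_mul_of_nonneg_left hCS (show (0:ℝ) ≤ 4 * (j - jmin) ^ 2 by positivity)]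
  rw [hswap]
  have : B * ∑ i, e i * (∑ μ, s μ i) = B * T := rfl
  rw [this]
  linarith [hQsum, hD]
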